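/- (Leading-order photon efficiency of the BPSK Holevo capacity.) Let h be the binary entropy function in nats, h(x) = -x ln x - (1-x) ln(1-x) with 0 ln 0 = 0, and let C∞(E) = h((1 + e^{-2E})/2) be the BPSK Holevo capacity in nats per symbol. Then lim_{E → 0⁺} [ C∞(E)/E + ln E ] = 1, i.e. the Holevo photon efficiency of BPSK satisfies C∞(E)/E = -ln E + 1 + o(1) nats per photon as E → 0⁺. -/

import Mathlib

open Filter Topology Real

private lemma hasDerivAt_q : HasDerivAt (fun E : ℝ => (1 - Real.exp (-(2 * E))) / 2) 1 0 := by
  have h1 : HasDerivAt (fun E : ℝ => -(2 * E)) (-2) 0 := by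
    simpa [Pi.neg_def] using ((hasDerivAt_id (0:ℝ)).const_mul 2).neg
  have h2 := h1.exp
  have h3 := (h2.const_sub 1).div_const 2
  simpa using h3

private lemma hasDerivAt_logp :
    HasDerivAt (fun E : ℝ => Real.log ((1 + Real.exp (-(2 * E))) / 2)) (-1) 0 := by
  have h1 : HasDerivAt (fun E : ℝ => -(2 * E)) (-2) 0 := by
    simpa [Pi.neg_def] using ((hasDerivAt_id (0:ℝ)).const_mul 2).neg
  have h2 := h1.exp
  have h3 := (h2.const_add 1).div_const 2
  have h4 := h3.log (by norm_num)
  simpa using h4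

private lemma tendsto_slope_of_hasDerivAt {f : ℝ → ℝ} {d : ℝ}
    (hf : HasDerivAt f d 0) (h0 : f 0 = 0) :
    Tendsto (fun E : ℝ => f E / E) (𝓝[>] 0) (𝓝 d) := by
  have h := hasDerivAt_iff_tendsto_slope.mp hf
  have h' : Tendsto (slope f 0) (𝓝[>] 0) (𝓝 d) :=
    h.mono_left (nhdsWithin_mono _ (fun x hx => ne_of_gt hx))
  refine h'.congr fun E => ?_
  simp [slope_def_field, h0, div_eq_mul_inv, mul_comm]

private lemma tendsto_q_div : Tendsto (fun E : ℝ => (1 - Real.exp (-(2 * E))) / 2 / E)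
    (𝓝[>] 0) (𝓝 1) :=
  tendsto_slope_of_hasDerivAt hasDerivAt_q (by norm_num)

private lemma tendsto_logp_div :
    Tendsto (fun E : ℝ => Real.log ((1 + Real.exp (-(2 * E))) / 2) / E) (𝓝[>] 0) (𝓝 (-1)) :=
  tendsto_slope_of_hasDerivAt hasDerivAt_logp (by norm_num)

/-- Leading-order photon efficiency of the BPSK Holevo capacity
`C∞(E) = h((1 + e^{-2E})/2)`: `C∞(E)/E + ln E → 1` as `E → 0⁺`. -/
theorem bpsk_holevo_photon_efficiency_leading_order :
    Tendsto
      (fun E : ℝ =>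
        Real.binEntropy ((1 + Real.exp (-(2 * E))) / 2) / E + Real.log E)
      (𝓝[>] 0) (𝓝 1) := by
  set p : ℝ → ℝ := fun E => (1 + Real.exp (-(2 * E))) / 2 with hp
  set q : ℝ → ℝ := fun E => (1 - Real.exp (-(2 * E))) / 2 with hq
  -- limits of the three pieces
  have hpcont : Tendsto p (𝓝[>] 0) (𝓝 1) := by
    have h : ContinuousAt p 0 := by fun_prop
    have h2 : Tendsto p (𝓝 0) (𝓝 (p 0)) := h.tendsto
    have h3 : p 0 = 1 := by simp [hp]
    rw [h3] at h2
    exact h2.mono_left nhdsWithin_le_nhds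
  have t1 : Tendsto (fun E => -(p E) * (Real.log (p E) / E)) (𝓝[>] 0) (𝓝 1) := by
    have := (hpcont.neg).mul tendsto_logp_div
    simpa using this
  have t2 : Tendsto (fun E => (q E / E) * Real.log (q E / E)) (𝓝[>] 0) (𝓝 0) := by
    have hlog : Tendsto (fun E => Real.log (q E / E)) (𝓝[>] 0) (𝓝 0) := by
      have := (Real.continuousAt_log (one_ne_zero)).tendsto.comp tendsto_q_div
      simpa [hq, Function.comp_def] using this
    simpa using tendsto_q_div.mul hlog
  have t3 : Tendsto (fun E => (1 - q E / E) * Real.log E) (𝓝[>] 0) (𝓝 0) := by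
    have hbound : ∀ᶠ E in 𝓝[>] (0:ℝ),
        ‖(1 - q E / E) * Real.log E‖ ≤ 2 * |Real.log E * E| := by
      filter_upwards [self_mem_nhdsWithin,
        Ioo_mem_nhdsGT_of_mem (Set.left_mem_Ico.2 (by norm_num : (0:ℝ) < 1/2))]
        with E hE hE2
      have hEpos : 0 < E := hE
      have habs : |(-(2*E) : ℝ)| ≤ 1 := by
        rw [abs_neg, abs_of_nonneg (by positivity)]
        nlinarith [hE2.2]
      have hkey := Real.abs_exp_sub_one_sub_id_le habs
      have h1 : 1 - q E / E = (Real.exp (-(2*E)) - 1 - (-(2*E))) / (2 * E) := by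
        simp only [hq]
        field_simp [hq]
        ring
      rw [norm_mul, Real.norm_eq_abs, Real.norm_eq_abs, h1, abs_div,
        abs_of_pos (by positivity : (0:ℝ) < 2 * E)]
      have h2 : |Real.exp (-(2*E)) - 1 - (-(2*E))| / (2 * E) ≤ 2 * E := by
        rw [div_le_iff₀ (by positivity)]
        calc |Real.exp (-(2*E)) - 1 - (-(2*E))| ≤ (-(2*E))^2 := hkey
          _ = 2 * E * (2 * E) := by ring
      calc |Real.exp (-(2*E)) - 1 - (-(2*E))| / (2 * E) * |Real.log E|
          ≤ 2 * E * |Real.log E| := by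
            apply mul_le_mul_of_nonneg_right h2 (abs_nonneg _)
        _ = 2 * |Real.log E * E| := by
            rw [abs_mul, abs_of_pos hEpos]; ring
    have hlim : Tendsto (fun E : ℝ => 2 * |Real.log E * E|) (𝓝[>] 0) (𝓝 0) := by
      have h := tendsto_log_mul_rpow_nhdsGT_zero (r := 1) one_pos
      simp only [Real.rpow_one] at h
      have := (h.abs).const_mul 2
      simpa using this
    exact squeeze_zero_norm' hbound hlim
  -- combine
  have tsum : Tendsto (fun E => -(p E) * (Real.log (p E) / E)
      - (q E / E) * Real.log (q E / E) + (1 - q E / E) * Real.log E) (𝓝[>] 0) (𝓝 1) := by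
    have := (t1.sub t2).add t3
    simpa using this
  refine tsum.congr' ?_
  filter_upwards [self_mem_nhdsWithin] with E hE
  have hEpos : (0:ℝ) < E := hE
  have hqpos : 0 < q E := by
    have : Real.exp (-(2*E)) < 1 := Real.exp_lt_one_iff.mpr (by linarith)
    simp only [hq]
    linarith
  have hppos : 0 < p E := by
    have := Real.exp_pos (-(2*E))
    simp only [hp]; linarith
  have hbe : Real.binEntropy (p E) = -(p E) * Real.log (p E) - q E * Real.log (q E) := by
    have h1 : 1 - p E = q E := by simp only [hp, hq]; ring
    rw [Real.binEntropy, Real.log_inv, Real.log_inv, h1]; ring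
  have hlogq : Real.log (q E / E) = Real.log (q E) - Real.log E :=
    Real.log_div (ne_of_gt hqpos) (ne_of_gt hEpos)
  show -(p E) * (Real.log (p E) / E) - (q E / E) * Real.log (q E / E)
      + (1 - q E / E) * Real.log E
    = Real.binEntropy ((1 + Real.exp (-(2 * E))) / 2) / E + Real.log E
  rw [show ((1 + Real.exp (-(2 * E))) / 2 : ℝ) = p E from rfl, hbe, hlogq]
  field_simp
  ring
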